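/- Let 𝕜 be ℝ or ℂ and let A be a unital associative 𝕜-algebra which is also an inner product space over 𝕜 whose unit e₀ satisfies ‖e₀‖ = 1. Suppose there exists f ∈ A with f ≠ 0 such that ⟪e₀, f⟫ = 0, ⟪f, f·f⟫ = 0, and Re⟪e₀, f·f⟫ ≥ 0. Then for every real constant γ with γ < √(4/3) there exist a, b ∈ A such that ‖a·b‖ > γ·‖a‖·‖b‖. -/

import Mathlib

/-- **Theorem 1 (no-go theorem).** Let `𝕜` be `ℝ` or `ℂ` and let `A` be a unital associative
`𝕜`-algebra (given by a bilinear multiplication `mul` with two-sided unit `e`) which is also an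
inner product space over `𝕜` whose unit satisfies `‖e‖ = 1`.  If there exists `f ≠ 0` with
`⟪e, f⟫ = 0`, `⟪f, f·f⟫ = 0` and `Re ⟪e, f·f⟫ ≥ 0`, then for every real `γ < √(4/3)` there are
`a, b` with `‖a·b‖ > γ·‖a‖·‖b‖`. -/
theorem no_submultiplicative_hilbert_norm_with_constant_lt_sqrt_four_thirds
    {𝕜 : Type*} [RCLike 𝕜] {A : Type*} [NormedAddCommGroup A] [InnerProductSpace 𝕜 A]
    (mul : A →ₗ[𝕜] A →ₗ[𝕜] A)
    (hassoc : ∀ a b c : A, mul (mul a b) c = mul a (mul b c))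
    (e : A) (hel : ∀ a : A, mul e a = a) (her : ∀ a : A, mul a e = a)
    (he : ‖e‖ = 1)
    (f : A) (hf : f ≠ 0)
    (h1 : (inner 𝕜 e f : 𝕜) = 0)
    (h2 : (inner 𝕜 f (mul f f) : 𝕜) = 0)
    (h3 : 0 ≤ RCLike.re (inner 𝕜 e (mul f f) : 𝕜)) :
    ∀ γ : ℝ, γ < Real.sqrt (4 / 3) → ∃ a b : A, γ * ‖a‖ * ‖b‖ < ‖mul a b‖ := by
  intro γ hγ
  have hf0 : (0:ℝ) < ‖f‖ := norm_pos_iff.mpr hf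
  have hsqrt2 : (0:ℝ) < Real.sqrt 2 := Real.sqrt_pos.mpr (by norm_num)
  set s : ℝ := (Real.sqrt 2 * ‖f‖)⁻¹ with hs
  have hspos : 0 < s := by positivity
  have hsf : s * ‖f‖ = (Real.sqrt 2)⁻¹ := by
    field_simp [hs]
    rw [hs]; field_simp
  have hsfsq : (s * ‖f‖)^2 = 1/2 := by
    rw [hsf, inv_pow, Real.sq_sqrt (by norm_num : (0:ℝ) ≤ 2)]
    norm_num
  set c : 𝕜 := (s : 𝕜) with hc
  refine ⟨e + c • f, e + c • f, ?_⟩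
  have h2' : (inner 𝕜 (mul f f) f : 𝕜) = 0 := by
    rw [← inner_conj_symm, h2]; simp
  have expand : mul (e + c • f) (e + c • f)
      = (e + (c*c) • mul f f) + (c + c) • f := by
    simp only [map_add, map_smul, LinearMap.add_apply, LinearMap.smul_apply, hel, her,
      smul_smul]
    module
  have hxy : (inner 𝕜 (e + (c*c) • mul f f) ((c+c) • f) : 𝕜) = 0 := by
    simp [inner_add_left, inner_smul_left, inner_smul_right, h1, h2']
  have hcs : ‖c‖ = s := by
    rw [hc, RCLike.norm_ofReal, abs_of_pos hspos]
  -- norm of a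
  have hia : (inner 𝕜 e (c • f) : 𝕜) = 0 := by simp [inner_smul_right, h1]
  have hna : ‖e + c • f‖^2 = 3/2 := by
    rw [norm_add_sq (𝕜 := 𝕜), hia, he, norm_smul, hcs]
    simp only [map_zero]
    rw [mul_pow]
    nlinarith [hsfsq]
  -- lower bound for the norm of e + c² f²
  have hre : 0 ≤ RCLike.re (inner 𝕜 e ((c*c) • mul f f) : 𝕜) := by
    rw [inner_smul_right]
    have hcc : c * c = ((s*s : ℝ) : 𝕜) := by push_cast [hc]; ring
    rw [hcc, RCLike.re_ofReal_mul]
    have : (0:ℝ) ≤ s * s := by positivity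
    exact mul_nonneg this h3
  have hxlb : 1 ≤ ‖e + (c*c) • mul f f‖^2 := by
    rw [norm_add_sq (𝕜 := 𝕜), he]
    nlinarith [sq_nonneg ‖(c*c) • mul f f‖]
  have hyb : ‖(c+c) • f‖^2 = 2 := by
    rw [norm_smul]
    have : ‖c + c‖ = 2 * s := by
      rw [hc, ← RCLike.ofReal_add, RCLike.norm_ofReal, abs_of_pos (by positivity)]
      ring
    rw [this, mul_pow]
    nlinarith [hsfsq]
  have hab2 : 3 ≤ ‖mul (e + c • f) (e + c • f)‖^2 := by
    rw [expand, norm_add_sq (𝕜 := 𝕜), hxy, hyb]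
    simp only [map_zero]
    linarith
  -- finish
  have hnm0 : 0 ≤ ‖mul (e + c • f) (e + c • f)‖ := norm_nonneg _
  have hna' : ‖e + c • f‖ * ‖e + c • f‖ = 3/2 := by
    rw [← pow_two]; exact hna
  have hs43 : Real.sqrt (4/3) ^ 2 = 4/3 := Real.sq_sqrt (by norm_num)
  have hs43n : 0 ≤ Real.sqrt (4/3) := Real.sqrt_nonneg _
  have hm3 : Real.sqrt 3 ≤ ‖mul (e + c • f) (e + c • f)‖ := by
    calc Real.sqrt 3 ≤ Real.sqrt (‖mul (e + c • f) (e + c • f)‖^2) :=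
          Real.sqrt_le_sqrt hab2
      _ = ‖mul (e + c • f) (e + c • f)‖ := Real.sqrt_sq hnm0
  have hkey : Real.sqrt (4/3) * (3/2) = Real.sqrt 3 := by
    rw [show (3/2 : ℝ) = Real.sqrt ((3/2)^2) from (Real.sqrt_sq (by norm_num)).symm,
      ← Real.sqrt_mul (by norm_num : (0:ℝ) ≤ 4/3)]
    norm_num
  calc γ * ‖e + c • f‖ * ‖e + c • f‖ = γ * (3/2) := by rw [mul_assoc, hna']
    _ < Real.sqrt (4/3) * (3/2) := by linarith [mul_lt_mul_of_pos_right hγ (by norm_num : (0:ℝ) < 3/2)]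
    _ = Real.sqrt 3 := hkey
    _ ≤ _ := hm3
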